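/- Let R be a commutative Noetherian ring and x_1,...,x_d a regular R-sequence contained in the Jacobson radical of R. Then every nonzero monomial ideal I with respect to x_1,...,x_d can be written as a finite intersection of generalized-parametric ideals, i.e. ideals of the form x_{i_1}^{e_1}R + ... + x_{i_k}^{e_k}R with distinct indices i_1,...,i_k and positive exponents e_j. -/

import Mathlib

/-- A generalized-parametric ideal with respect to the sequence `x`: an ideal generated
by pure powers `x i ^ e i` for `i` in some subset, with all exponents positive. -/
def IsGPIdeal {R : Type*} [CommRing R] {d : ℕ} (x : Fin d → R) (q : Ideal R) : Prop :=
  ∃ (s : Finset (Fin d)) (e : Fin d → ℕ), (∀ i ∈ s, 1 ≤ e i) ∧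
    q = Ideal.span ((fun i => x i ^ e i) '' s)

namespace HRS

variable {R : Type*} [CommRing R] {d : ℕ}

/-- the monomial -/
def mon (x : Fin d → R) (e : Fin d → ℕ) : R := ∏ i, x i ^ e i

/-- monomial ideal from a finite set of exponent vectors -/
def MI (x : Fin d → R) (E : Finset (Fin d → ℕ)) : Ideal R :=
  Ideal.span (mon x '' ↑E)

def degsum (E : Finset (Fin d → ℕ)) : ℕ := ∑ e ∈ E, ∑ i, e i

def esub (a : ℕ) (k : Fin d) (e : Fin d → ℕ) : Fin d → ℕ :=
  fun i => if i = k then e i - a else e i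

def delta (a : ℕ) (k : Fin d) : Fin d → ℕ := fun i => if i = k then a else 0

lemma mon_add (x : Fin d → R) (u v : Fin d → ℕ) :
    mon x (u + v) = mon x u * mon x v := by
  simp [mon, Pi.add_apply, pow_add, Finset.prod_mul_distrib]

lemma mon_delta (x : Fin d → R) (a : ℕ) (k : Fin d) :
    mon x (delta a k) = x k ^ a := by
  unfold mon delta
  rw [Finset.prod_eq_single k (fun i _ hi => by simp [hi]) (by simp)]
  simp

lemma mon_dvd (x : Fin d → R) {u v : Fin d → ℕ} (h : u ≤ v) :
    mon x u ∣ mon x v := by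
  refine ⟨mon x (v - u), ?_⟩
  rw [← mon_add]
  congr 1
  funext i
  simpa using (Nat.add_sub_cancel' (h i)).symm

lemma esub_zero (k : Fin d) (e : Fin d → ℕ) : esub 0 k e = e := by
  funext i; simp [esub]

lemma esub_esub (a b : ℕ) (k : Fin d) (e : Fin d → ℕ) :
    esub a k (esub b k e) = esub (b + a) k e := by
  funext i; simp only [esub]; split <;> simp [Nat.sub_sub]

lemma esub_eq_self {a : ℕ} {k : Fin d} {e : Fin d → ℕ} (h : e k = 0) :
    esub a k e = e := by
  funext i; simp only [esub]; split <;> simp_all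

lemma esub_apply_ne {a : ℕ} {k i : Fin d} (e : Fin d → ℕ) (h : i ≠ k) :
    esub a k e i = e i := by simp [esub, h]

lemma esub_add_delta {a : ℕ} {k : Fin d} {e : Fin d → ℕ} (h : a ≤ e k) :
    esub a k e + delta a k = e := by
  funext i
  simp only [Pi.add_apply, esub, delta]
  split
  · next hik => subst hik; omega
  · simp

lemma le_esub_add_delta (a : ℕ) (k : Fin d) (e : Fin d → ℕ) :
    e ≤ esub a k e + delta a k := by
  intro i
  simp only [Pi.add_apply, esub, delta]
  split <;> omega

lemma mul_mon_esub (x : Fin d → R) {k : Fin d} {e : Fin d → ℕ} (h : 1 ≤ e k) :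
    x k * mon x (esub 1 k e) = mon x e := by
  conv_lhs => rw [← pow_one (x k), ← mon_delta x 1 k]
  rw [mul_comm, ← mon_add, esub_add_delta h]

lemma mon_dvd_esub_mul_pow (x : Fin d → R) (a : ℕ) (k : Fin d) (e : Fin d → ℕ) :
    mon x e ∣ mon x (esub a k e) * x k ^ a := by
  rw [← mon_delta x a k, ← mon_add]
  exact mon_dvd x (le_esub_add_delta a k e)

lemma mon_mem_MI (x : Fin d → R) {E : Finset (Fin d → ℕ)} {e : Fin d → ℕ}
    (he : e ∈ E) : mon x e ∈ MI x E :=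
  Ideal.subset_span ⟨e, he, rfl⟩

lemma MI_mono (x : Fin d → R) {E F : Finset (Fin d → ℕ)} (h : E ⊆ F) :
    MI x E ≤ MI x F :=
  Ideal.span_mono (Set.image_mono h)

lemma MI_empty (x : Fin d → R) : MI x (∅ : Finset (Fin d → ℕ)) = ⊥ := by
  simp [MI]

lemma MI_insert (x : Fin d → R) (e : Fin d → ℕ) (E : Finset (Fin d → ℕ)) :
    MI x (insert e E) = Ideal.span {mon x e} ⊔ MI x E := by
  rw [MI, Finset.coe_insert, Set.image_insert_eq, Ideal.span_insert]; rfl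

lemma exists_coeffs (x : Fin d → R) {E : Finset (Fin d → ℕ)} {z : R}
    (hz : z ∈ MI x E) : ∃ c : (Fin d → ℕ) → R, z = ∑ e ∈ E, c e * mon x e := by
  induction hz using Submodule.span_induction with
  | mem g hg =>
    obtain ⟨e, he, rfl⟩ := hg
    refine ⟨fun f => if f = e then 1 else 0, ?_⟩
    rw [Finset.sum_eq_single e (fun f _ hf => by simp [hf]) (by simp_all)]
    simp
  | zero => exact ⟨0, by simp⟩
  | add a b _ _ ha hb =>
    obtain ⟨c₁, rfl⟩ := ha; obtain ⟨c₂, rfl⟩ := hb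
    exact ⟨c₁ + c₂, by rw [← Finset.sum_add_distrib]; simp [add_mul]⟩
  | smul r a _ ha =>
    obtain ⟨c, rfl⟩ := ha
    exact ⟨r • c, by rw [Finset.smul_sum]; simp [mul_assoc, smul_eq_mul]⟩

lemma mul_mem_of_forall {s : Set R} {I : Ideal R} {c z : R}
    (h : ∀ g ∈ s, c * g ∈ I) (hz : z ∈ Ideal.span s) : c * z ∈ I := by
  induction hz using Submodule.span_induction with
  | mem g hg => exact h g hg
  | zero => simp
  | add a b _ _ ha hb => rw [mul_add]; exact I.add_mem ha hb
  | smul r a _ ha =>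
    rw [smul_eq_mul, mul_comm r a, ← mul_assoc]
    exact I.mul_mem_right r ha

lemma mul_MI_mem {x : Fin d → R} {E : Finset (Fin d → ℕ)} {I : Ideal R} {c z : R}
    (h : ∀ e ∈ E, c * mon x e ∈ I) (hz : z ∈ MI x E) : c * z ∈ I :=
  mul_mem_of_forall (fun g hg => by obtain ⟨e, he, rfl⟩ := hg; exact h e he) hz

lemma degsum_le_of_subset {E F : Finset (Fin d → ℕ)} (h : E ⊆ F) :
    degsum E ≤ degsum F := Finset.sum_le_sum_of_subset h

lemma sum_image_le {α β : Type*} [DecidableEq α] [DecidableEq β] (E : Finset α) (f : α → β) (g : β → ℕ) :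
    (E.image f).sum g ≤ ∑ e ∈ E, g (f e) := by
  induction E using Finset.induction with
  | empty => simp
  | insert a E hae ih =>
    rw [Finset.image_insert, Finset.sum_insert hae]
    by_cases h : f a ∈ Finset.image f E
    · rw [Finset.insert_eq_self.2 h]
      exact (by simpa using ih : (Finset.image f E).sum g ≤ _).trans (Nat.le_add_left _ _)
    · rw [Finset.sum_insert h]
      exact Nat.add_le_add_left (by simpa using ih) _

open RingTheory.Sequence Pointwise

lemma smul_top_eq (a : R) : (a • ⊤ : Submodule R R) = Ideal.span {a} := by
  rw [← Submodule.ideal_span_singleton_smul, smul_eq_mul, Ideal.mul_top]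

lemma quot_step {a : R} {l : List R} (h : IsWeaklyRegular R (a :: l)) :
    IsWeaklyRegular (R ⧸ Ideal.span {a}) (l.map (Ideal.Quotient.mk (Ideal.span {a}))) := by
  rw [isWeaklyRegular_cons_iff] at h
  have h2 := h.2
  have e : QuotSMulTop a R ≃ₗ[R] (R ⧸ Ideal.span {a}) :=
    Submodule.quotEquivOfEq _ _ (smul_top_eq a)
  have h3 : IsWeaklyRegular (R ⧸ Ideal.span {a}) l := (e.isWeaklyRegular_congr l).mp h2
  rw [← Ideal.Quotient.algebraMap_eq]
  exact (isWeaklyRegular_map_algebraMap_iff (R ⧸ Ideal.span {a}) _ l).mpr h3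

lemma annihilator_self (R : Type*) [CommRing R] : Module.annihilator R R = ⊥ := by
  ext r
  rw [Module.mem_annihilator]
  constructor
  · intro h; simpa using h 1
  · rintro rfl m; simp

lemma jac_quot {I : Ideal R} {a : R} (h : a ∈ Ideal.jacobson (⊥ : Ideal R)) :
    Ideal.Quotient.mk I a ∈ Ideal.jacobson (⊥ : Ideal (R ⧸ I)) := by
  rw [Ideal.mem_jacobson_bot] at h ⊢
  intro y
  obtain ⟨z, rfl⟩ := Ideal.Quotient.mk_surjective y
  have := (h z).map (Ideal.Quotient.mk I)
  simpa using this

/-- The hypothesis package: every nodup list of variables from `S` is weakly regular. -/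
def WReg (x : Fin d → R) (S : Finset (Fin d)) : Prop :=
  ∀ l : List (Fin d), l.Nodup → (∀ i ∈ l, i ∈ S) → IsWeaklyRegular R (l.map x)

lemma WReg.regular {x : Fin d → R} {S : Finset (Fin d)} (hW : WReg x S)
    {k : Fin d} (hk : k ∈ S) : IsSMulRegular R (x k) := by
  have := hW [k] (by simp) (by simpa)
  rw [List.map_cons, List.map_nil, isWeaklyRegular_cons_iff] at this
  exact this.1

lemma WReg.quot {x : Fin d → R} {S : Finset (Fin d)} (hW : WReg x S)
    {m : Fin d} (hm : m ∈ S) :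
    WReg (fun i => Ideal.Quotient.mk (Ideal.span {x m}) (x i)) (S.erase m) := by
  intro l hl hlS
  have hml : m ∉ l := fun hmem => (Finset.mem_erase.mp (hlS m hmem)).1 rfl
  have h := hW (m :: l) (List.nodup_cons.mpr ⟨hml, hl⟩)
    (by intro i hi
        rcases List.mem_cons.mp hi with rfl | hi
        · exact hm
        · exact Finset.mem_of_mem_erase (hlS i hi))
  rw [List.map_cons] at h
  have := quot_step h
  rwa [List.map_map] at this

lemma mk_mon {I : Ideal R} (x : Fin d → R) (e : Fin d → ℕ) :
    Ideal.Quotient.mk I (mon x e) = mon (fun i => Ideal.Quotient.mk I (x i)) e := by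
  simp [mon]

lemma map_MI {I : Ideal R} (x : Fin d → R) (E : Finset (Fin d → ℕ)) :
    Ideal.map (Ideal.Quotient.mk I) (MI x E)
      = MI (fun i => Ideal.Quotient.mk I (x i)) E := by
  rw [MI, Ideal.map_span, ← Set.image_comp, MI]
  congr 1
  exact Set.image_congr fun e _ => mk_mon x e

/-- In the quotient by `x m`, only the generators with `e m = 0` matter. -/
lemma MI_quot_filter {x : Fin d → R} {m : Fin d} (E : Finset (Fin d → ℕ)) :
    MI (fun i => Ideal.Quotient.mk (Ideal.span {x m}) (x i)) E
      = MI (fun i => Ideal.Quotient.mk (Ideal.span {x m}) (x i))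
          (E.filter (fun e => e m = 0)) := by
  set q : Fin d → R ⧸ Ideal.span {x m} := fun i => Ideal.Quotient.mk _ (x i)
  have hq : q m = 0 := by
    simp [q, Ideal.Quotient.eq_zero_iff_mem, Ideal.mem_span_singleton]
  apply le_antisymm
  · rw [MI, Ideal.span_le]
    rintro _ ⟨e, he, rfl⟩
    by_cases h0 : e m = 0
    · exact mon_mem_MI q (Finset.mem_filter.mpr ⟨he, h0⟩)
    · have : mon q e = 0 := by
        apply Finset.prod_eq_zero (Finset.mem_univ m)
        rw [hq, zero_pow h0]
      rw [this]; exact Ideal.zero_mem _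
  · exact MI_mono q (Finset.filter_subset _ _)

lemma mem_MI_sup_of_quot {x : Fin d → R} {m : Fin d} {E : Finset (Fin d → ℕ)} {t : R}
    (h : Ideal.Quotient.mk (Ideal.span {x m}) t
        ∈ MI (fun i => Ideal.Quotient.mk (Ideal.span {x m}) (x i)) E) :
    t ∈ MI x E ⊔ Ideal.span {x m} := by
  rw [← map_MI (I := Ideal.span {x m}) x E, ← Ideal.mem_comap] at h
  have hcm := Ideal.comap_map_of_surjective (Ideal.Quotient.mk (Ideal.span {x m}))
    Ideal.Quotient.mk_surjective (MI x E)
  rw [hcm] at h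
  have hle : MI x E ⊔ Ideal.comap (Ideal.Quotient.mk (Ideal.span {x m})) ⊥
      ≤ MI x E ⊔ Ideal.span {x m} := by
    refine sup_le_sup le_rfl ?_
    intro z hz
    rw [Ideal.mem_comap] at hz
    rwa [← Ideal.mk_ker (I := Ideal.span {x m}), RingHom.mem_ker]
  exact hle h

lemma mem_MI_of_zero_mem {x : Fin d → R} {E : Finset (Fin d → ℕ)}
    (h : (0 : Fin d → ℕ) ∈ E) (z : R) : z ∈ MI x E := by
  have h1 : (1 : R) ∈ MI x E := by
    have := mon_mem_MI x h
    simpa [mon] using this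
  simpa using (MI x E).mul_mem_left z h1

lemma image_esub_of_forall_zero {E : Finset (Fin d → ℕ)} {k : Fin d}
    (h : ∀ e ∈ E, e k = 0) : E.image (esub 1 k) = E := by
  have : E.image (esub 1 k) = E.image id :=
    Finset.image_congr (fun e he => esub_eq_self (h e he))
  rw [this, Finset.image_id]

/-- The main colon lemma, proved by induction on `(S.card, degsum E)`. -/
theorem colon_aux {d : ℕ} : ∀ (n : ℕ) (R : Type u) [CommRing R]
    (x : Fin d → R) (S : Finset (Fin d)), S.card ≤ n →
    WReg x S → (∀ i ∈ S, x i ∈ Ideal.jacobson (⊥ : Ideal R)) →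
    ∀ (N : ℕ) (E : Finset (Fin d → ℕ)), degsum E ≤ N →
    (∀ e ∈ E, ∀ i, e i ≠ 0 → i ∈ S) →
    ∀ k ∈ S, ∀ z : R, z * x k ∈ MI x E → z ∈ MI x (E.image (esub 1 k)) := by
  intro n
  induction n with
  | zero =>
    intro R _ x S hcard hW hjac N E hdeg hsupp k hk z hz
    rw [Nat.le_zero, Finset.card_eq_zero] at hcard
    subst hcard
    exact absurd hk (Finset.notMem_empty k)
  | succ n ihn =>
    intro R _ x S hcard hW hjac N
    induction N with
    | zero =>
      intro E hdeg hsupp k hk z hz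
      rcases Finset.eq_empty_or_nonempty E with rfl | ⟨es, hes⟩
      · rw [Finset.image_empty, MI_empty]
        rw [MI_empty] at hz
        have hreg := hW.regular hk
        have h0 : x k • z = x k • (0 : R) := by
          rw [smul_eq_mul, smul_eq_mul, mul_zero, mul_comm]
          exact hz
        exact hreg h0
      · have hes0 : es = 0 := by
          have hdeg' : ∑ e ∈ E, ∑ i, e i ≤ 0 := hdeg
          have h2 : (∑ i, es i) ≤ ∑ e ∈ E, ∑ i, e i :=
            Finset.single_le_sum (f := fun e => ∑ i, e i) (fun e _ => Nat.zero_le _) hes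
          have h1 : ∑ i, es i = 0 := Nat.le_zero.mp (h2.trans hdeg')
          funext i
          exact (Finset.sum_eq_zero_iff.mp h1) i (Finset.mem_univ i)
        rw [hes0] at hes
        have h00 : (0 : Fin d → ℕ) ∈ E.image (esub 1 k) := by
          have he' : esub 1 k 0 = 0 := esub_eq_self rfl
          exact he' ▸ Finset.mem_image_of_mem _ hes
        exact mem_MI_of_zero_mem h00 z
    | succ N ihN =>
      intro E hdeg hsupp k hk z hz
      by_cases hzero : (0 : Fin d → ℕ) ∈ E
      · have h00 : (0 : Fin d → ℕ) ∈ E.image (esub 1 k) := by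
          have he' : esub 1 k 0 = 0 := esub_eq_self rfl
          exact he' ▸ Finset.mem_image_of_mem _ hzero
        exact mem_MI_of_zero_mem h00 z
      rcases Finset.eq_empty_or_nonempty E with rfl | ⟨es, hes⟩
      · rw [Finset.image_empty, MI_empty]
        rw [MI_empty] at hz
        have hreg := hW.regular hk
        have h0 : x k • z = x k • (0 : R) := by
          rw [smul_eq_mul, smul_eq_mul, mul_zero, mul_comm]
          exact hz
        exact hreg h0
      have rep : ∀ m ∈ S, (∃ e' ∈ E, 1 ≤ e' m) → ∀ w : R,
          w * x m ∈ MI x E → w ∈ MI x (E.image (esub 1 m)) := by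
        intro m hm hex w hw
        obtain ⟨ep, hep, hepm⟩ := hex
        obtain ⟨c, hc⟩ := exists_coeffs x hw
        classical
        set E0 := E.filter (fun e => e m = 0) with hE0def
        set Ep := E.filter (fun e => ¬ e m = 0) with hEpdef
        set t := w - ∑ e ∈ Ep, c e * mon x (esub 1 m e) with ht
        have key : t * x m ∈ MI x E0 := by
          have hsplit : (∑ e ∈ E0, c e * mon x e) + (∑ e ∈ Ep, c e * mon x e)
              = ∑ e ∈ E, c e * mon x e := Finset.sum_filter_add_sum_filter_not E _ _
          have hterm : ∀ e ∈ Ep, (c e * mon x (esub 1 m e)) * x m = c e * mon x e := by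
            intro e he
            have h1 : 1 ≤ e m := by
              have := (Finset.mem_filter.mp he).2
              omega
            rw [mul_assoc, mul_comm (mon x (esub 1 m e)) (x m), mul_mon_esub x h1]
          have : t * x m = ∑ e ∈ E0, c e * mon x e := by
            rw [ht, sub_mul, Finset.sum_mul]
            rw [Finset.sum_congr rfl hterm, hc, ← hsplit]
            ring
          rw [this]
          exact Ideal.sum_mem _ fun e he =>
            (MI x E0).mul_mem_left (c e) (mon_mem_MI x he)
        have hdeg0 : degsum E0 ≤ N := by
          have h1 : E0 ⊆ E.erase ep := by
            intro e he
            rw [Finset.mem_erase]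
            refine ⟨?_, (Finset.mem_filter.mp he).1⟩
            rintro rfl
            have := (Finset.mem_filter.mp he).2
            omega
          have h2 : degsum (E.erase ep) + (∑ i, ep i) = degsum E :=
            Finset.sum_erase_add E _ hep
          have h3 : 1 ≤ ∑ i, ep i :=
            le_trans hepm (Finset.single_le_sum (fun i _ => Nat.zero_le _)
              (Finset.mem_univ m))
          have := degsum_le_of_subset h1
          omega
        have hsupp0 : ∀ e ∈ E0, ∀ i, e i ≠ 0 → i ∈ S :=
          fun e he => hsupp e (Finset.mem_filter.mp he).1
        have ht0 : t ∈ MI x (E0.image (esub 1 m)) := ihN E0 hdeg0 hsupp0 m hm t key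
        have himg0 : E0.image (esub 1 m) = E0 :=
          image_esub_of_forall_zero (fun e he => (Finset.mem_filter.mp he).2)
        rw [himg0] at ht0
        have hw2 : w = t + ∑ e ∈ Ep, c e * mon x (esub 1 m e) := by rw [ht]; ring
        rw [hw2]
        refine Ideal.add_mem _ ?_ (Ideal.sum_mem _ fun e he => ?_)
        · refine MI_mono x ?_ ht0
          intro e he
          rw [← esub_eq_self (a := 1) (k := m) (Finset.mem_filter.mp he).2]
          exact Finset.mem_image_of_mem _ (Finset.mem_filter.mp he).1
        · exact Ideal.mul_mem_left _ _ (mon_mem_MI x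
            (Finset.mem_image_of_mem _ (Finset.mem_filter.mp he).1))
      by_cases hcase : ∃ e ∈ E, 1 ≤ e k
      · exact rep k hk hcase z hz
      -- Case II : no generator involves x k; goal becomes z ∈ MI x E
      push_neg at hcase
      have hEk : ∀ e ∈ E, e k = 0 := fun e he => by have := hcase e he; omega
      rw [image_esub_of_forall_zero hEk]
      have hes0 : es ≠ 0 := fun h => hzero (h ▸ hes)
      obtain ⟨m, hm1⟩ : ∃ m, 1 ≤ es m := by
        by_contra hno
        push_neg at hno
        exact hes0 (funext fun i => by have := hno i; simp only [Pi.zero_apply]; omega)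
      have hmS : m ∈ S := hsupp es hes m (by omega)
      have hmk : m ≠ k := by
        rintro rfl
        rw [hEk es hes] at hm1
        omega
      classical
      set Q := R ⧸ Ideal.span {x m} with hQ
      set xq : Fin d → Q := fun i => Ideal.Quotient.mk _ (x i) with hxq
      set E0 := E.filter (fun e => e m = 0) with hE0def
      have hWq : WReg xq (S.erase m) := hW.quot hmS
      have hjq : ∀ i ∈ S.erase m, xq i ∈ Ideal.jacobson (⊥ : Ideal Q) :=
        fun i hi => jac_quot (hjac i (Finset.mem_of_mem_erase hi))
      have hq : Ideal.Quotient.mk (Ideal.span {x m}) z * xq k ∈ MI xq E0 := by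
        have h1 : Ideal.Quotient.mk (Ideal.span {x m}) (z * x k)
            ∈ Ideal.map (Ideal.Quotient.mk (Ideal.span {x m})) (MI x E) :=
          Ideal.mem_map_of_mem _ hz
        rw [map_MI] at h1
        rw [MI_quot_filter E] at h1
        simpa using h1
      have hcard' : (S.erase m).card ≤ n := by
        rw [Finset.card_erase_of_mem hmS]
        omega
      have hsupp0 : ∀ e ∈ E0, ∀ i, e i ≠ 0 → i ∈ S.erase m := by
        intro e he i hi
        rw [Finset.mem_erase]
        refine ⟨?_, hsupp e (Finset.mem_filter.mp he).1 i hi⟩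
        rintro rfl
        exact hi (Finset.mem_filter.mp he).2
      have hkSm : k ∈ S.erase m := Finset.mem_erase.mpr ⟨fun h => hmk h.symm, hk⟩
      have hq2 := ihn Q xq (S.erase m) hcard' hWq hjq (degsum E0) E0 le_rfl
        hsupp0 k hkSm _ hq
      rw [image_esub_of_forall_zero
        (fun e he => hEk e (Finset.mem_filter.mp he).1)] at hq2
      have hsup : z ∈ MI x E0 ⊔ Ideal.span {x m} := mem_MI_sup_of_quot hq2
      obtain ⟨p, hp, q0, hq0, hpq⟩ := Submodule.mem_sup.mp hsup
      obtain ⟨cc, hcc⟩ := Ideal.mem_span_singleton'.mp hq0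
      have hzp : z = p + cc * x m := by rw [hcc, hpq]
      have h6 : (cc * x k) * x m ∈ MI x E := by
        have h5 : (z - p) * x k ∈ MI x E := by
          rw [sub_mul]
          exact Ideal.sub_mem _ hz
            (Ideal.mul_mem_right _ _ (MI_mono x (Finset.filter_subset _ _) hp))
        have : (cc * x k) * x m = (z - p) * x k := by
          rw [hzp]; ring
        rw [this]
        exact h5
      have h7 := rep m hmS ⟨es, hes, hm1⟩ (cc * x k) h6
      set E' := E.image (esub 1 m) with hE'
      have hdegE' : degsum E' ≤ N := by
        have h1 : degsum E' ≤ ∑ e ∈ E, ∑ i, esub 1 m e i :=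
          sum_image_le E (esub 1 m) (fun e => ∑ i, e i)
        have h2 : ∑ e ∈ E, ∑ i, esub 1 m e i < degsum E := by
          refine Finset.sum_lt_sum (fun e _ => Finset.sum_le_sum
            (fun i _ => by simp only [esub]; split <;> omega)) ⟨es, hes, ?_⟩
          refine Finset.sum_lt_sum (fun i _ => by simp only [esub]; split <;> omega)
            ⟨m, Finset.mem_univ m, ?_⟩
          have hh : esub 1 m es m = es m - 1 := by simp [esub]
          omega
        omega
      have hsuppE' : ∀ e ∈ E', ∀ i, e i ≠ 0 → i ∈ S := by
        intro e' he' i hi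
        obtain ⟨e, he, rfl⟩ := Finset.mem_image.mp he'
        refine hsupp e he i (fun h0 => hi ?_)
        simp only [esub]
        split <;> omega
      have hE'k : ∀ e' ∈ E', e' k = 0 := by
        intro e' he'
        obtain ⟨e, he, rfl⟩ := Finset.mem_image.mp he'
        rw [esub_apply_ne e (fun h => hmk h.symm)]
        exact hEk e he
      have h8 := ihN E' hdegE' hsuppE' k hk cc h7
      rw [image_esub_of_forall_zero hE'k] at h8
      have h9 : cc * x m ∈ MI x E := by
        rw [mul_comm]
        refine mul_MI_mem ?_ h8
        intro e' he'
        obtain ⟨e, he, rfl⟩ := Finset.mem_image.mp he'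
        by_cases h1 : 1 ≤ e m
        · rw [mul_mon_esub x h1]
          exact mon_mem_MI x he
        · rw [esub_eq_self (by omega)]
          exact Ideal.mul_mem_left _ _ (mon_mem_MI x he)
      rw [hzp]
      exact Ideal.add_mem _ (MI_mono x (Finset.filter_subset _ _) hp) h9

/-- One-variable colon lemma, clean form. -/
theorem colon_one {R : Type*} [CommRing R] {d : ℕ} (x : Fin d → R)
    (hW : WReg x Finset.univ) (hjac : ∀ i, x i ∈ Ideal.jacobson (⊥ : Ideal R))
    (E : Finset (Fin d → ℕ)) (k : Fin d) (z : R)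
    (h : z * x k ∈ MI x E) : z ∈ MI x (E.image (esub 1 k)) :=
  colon_aux Finset.univ.card R x Finset.univ le_rfl hW
    (fun i _ => hjac i) (degsum E) E le_rfl
    (fun _ _ i _ => Finset.mem_univ i) k (Finset.mem_univ k) z h

theorem colon_pow {R : Type*} [CommRing R] {d : ℕ} (x : Fin d → R)
    (hW : WReg x Finset.univ) (hjac : ∀ i, x i ∈ Ideal.jacobson (⊥ : Ideal R))
    (E : Finset (Fin d → ℕ)) (k : Fin d) (a : ℕ) (z : R)
    (h : z * x k ^ a ∈ MI x E) : z ∈ MI x (E.image (esub a k)) := by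
  induction a generalizing z E with
  | zero =>
    have himg : E.image (esub 0 k) = E := by
      have : E.image (esub 0 k) = E.image id :=
        Finset.image_congr (fun e _ => esub_zero k e)
      rw [this, Finset.image_id]
    rw [himg]
    simpa using h
  | succ a ih =>
    have h1 : (z * x k ^ a) * x k ∈ MI x E := by
      have : (z * x k ^ a) * x k = z * x k ^ (a + 1) := by ring
      rw [this]; exact h
    have h2 := colon_one x hW hjac E k (z * x k ^ a) h1
    have h3 := ih _ _ h2
    rwa [Finset.image_image,
      show esub a k ∘ esub 1 k = esub (a + 1) k from funext fun e => by
        rw [Function.comp_apply, esub_esub, Nat.add_comm]] at h3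

/-- The splitting lemma: a monomial ideal plus a mixed monomial splits as an
intersection. -/
theorem split {R : Type*} [CommRing R] {d : ℕ} (x : Fin d → R)
    (hW : WReg x Finset.univ) (hjac : ∀ i, x i ∈ Ideal.jacobson (⊥ : Ideal R))
    (E' : Finset (Fin d → ℕ)) (k : Fin d) (a : ℕ) (w : Fin d → ℕ)
    (hwk : w k = 0) :
    MI x E' ⊔ Ideal.span {x k ^ a * mon x w}
      = (MI x E' ⊔ Ideal.span {x k ^ a}) ⊓ (MI x E' ⊔ Ideal.span {mon x w}) := by
  classical
  apply le_antisymm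
  · refine sup_le (le_inf le_sup_left le_sup_left) ?_
    rw [Ideal.span_le]
    rintro _ rfl
    refine Submodule.mem_inf.mpr ⟨?_, ?_⟩
    · exact Ideal.mem_sup_right (Ideal.mul_mem_right _ _
        (Ideal.subset_span rfl))
    · exact Ideal.mem_sup_right (Ideal.mul_mem_left _ _
        (Ideal.subset_span rfl))
  · intro f hf
    obtain ⟨h1, h2⟩ := Submodule.mem_inf.mp hf
    obtain ⟨g, hg, r', hr', hgr⟩ := Submodule.mem_sup.mp h1
    obtain ⟨h, hh, s', hs', hhs⟩ := Submodule.mem_sup.mp h2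
    obtain ⟨r, hr⟩ := Ideal.mem_span_singleton'.mp hr'
    obtain ⟨s, hs⟩ := Ideal.mem_span_singleton'.mp hs'
    have hmem : r * x k ^ a ∈ MI x (insert w E') := by
      rw [MI_insert]
      have : r * x k ^ a = (h - g) + s * mon x w := by
        linear_combination hr + hgr - hhs - hs
      rw [this]
      exact Ideal.add_mem _
        (Ideal.mem_sup_right (Ideal.sub_mem _ hh hg))
        (Ideal.mem_sup_left (Ideal.mem_span_singleton'.mpr ⟨s, rfl⟩))
    have hcol := colon_pow x hW hjac (insert w E') k a r hmem
    have hfin : x k ^ a * r ∈ MI x E' ⊔ Ideal.span {x k ^ a * mon x w} := by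
      refine mul_MI_mem ?_ hcol
      intro e' he'
      obtain ⟨e, he, rfl⟩ := Finset.mem_image.mp he'
      rcases Finset.mem_insert.mp he with rfl | heE
      · rw [esub_eq_self hwk]
        exact Ideal.mem_sup_right (Ideal.subset_span rfl)
      · obtain ⟨cdvd, hcdvd⟩ := mon_dvd_esub_mul_pow x a k e
        have : x k ^ a * mon x (esub a k e) = mon x e * cdvd := by
          rw [← hcdvd]; ring
        rw [this]
        exact Ideal.mem_sup_left (Ideal.mul_mem_right _ _ (mon_mem_MI x heE))
    have hfr : f = g + x k ^ a * r := by linear_combination -hgr - hr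
    rw [hfr]
    exact Ideal.add_mem _ (Ideal.mem_sup_left hg) hfin

open Classical in
/-- weight of an exponent vector : 0 if a pure power, total degree otherwise -/
noncomputable def wt {d : ℕ} (e : Fin d → ℕ) : ℕ :=
  if (Finset.univ.filter (fun i => e i ≠ 0)).card ≤ 1 then 0 else ∑ i, e i

noncomputable def measure {d : ℕ} (F : Finset (Fin d → ℕ)) : ℕ := ∑ e ∈ F, wt e

lemma measure_insert_le {d : ℕ} (e : Fin d → ℕ) (F : Finset (Fin d → ℕ)) :
    measure (insert e F) ≤ wt e + measure F := by
  classical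
  by_cases h : e ∈ F
  · rw [Finset.insert_eq_self.mpr h]
    exact Nat.le_add_left _ _
  · rw [measure, Finset.sum_insert h]
    exact le_rfl

lemma mon_pure {R : Type*} [CommRing R] {d : ℕ} (x : Fin d → R) {e : Fin d → ℕ}
    {i : Fin d} (h : ∀ j, j ≠ i → e j = 0) : mon x e = x i ^ e i := by
  rw [mon, Finset.prod_eq_single i (fun j _ hj => by rw [h j hj, pow_zero]) (by simp)]

set_option maxHeartbeats 1000000 in
/-- Base case: an ideal generated by pure powers is generalized-parametric. -/
lemma GP_of_pure {R : Type*} [CommRing R] {d : ℕ} (x : Fin d → R)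
    (F : Finset (Fin d → ℕ)) (hne : ∀ e ∈ F, e ≠ 0)
    (hpure : ∀ e ∈ F, (Finset.univ.filter (fun i => e i ≠ 0)).card ≤ 1) :
    IsGPIdeal x (MI x F) := by
  classical
  -- for each e in F, there is a unique index in its support
  have hsupp : ∀ e ∈ F, ∃ i, e i ≠ 0 ∧ ∀ j, j ≠ i → e j = 0 := by
    intro e he
    obtain ⟨i, hi⟩ : ∃ i, e i ≠ 0 := by
      by_contra hno
      push_neg at hno
      exact hne e he (funext fun i => hno i)
    refine ⟨i, hi, fun j hj => ?_⟩
    by_contra hj0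
    have h2 : 1 < (Finset.univ.filter (fun i => e i ≠ 0)).card := by
      rw [Finset.one_lt_card]
      exact ⟨j, Finset.mem_filter.mpr ⟨Finset.mem_univ _, hj0⟩,
        i, Finset.mem_filter.mpr ⟨Finset.mem_univ _, hi⟩, hj⟩
    exact absurd (hpure e he) (by omega)
  set s : Finset (Fin d) :=
    F.biUnion (fun e => Finset.univ.filter (fun i => e i ≠ 0)) with hs
  set ε : Fin d → ℕ := fun i =>
    if h : (F.filter (fun e => e i ≠ 0)).Nonempty
    then ((F.filter (fun e => e i ≠ 0)).image (fun e => e i)).min' (by exact h.image _)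
    else 1 with hε
  refine ⟨s, ε, ?_, ?_⟩
  · -- positivity
    intro i hi
    obtain ⟨e, heF, hei⟩ := Finset.mem_biUnion.mp hi
    have hnon : (F.filter (fun e => e i ≠ 0)).Nonempty :=
      ⟨e, Finset.mem_filter.mpr ⟨heF, (Finset.mem_filter.mp hei).2⟩⟩
    have : ε i ∈ (F.filter (fun e => e i ≠ 0)).image (fun e => e i) := by
      rw [hε]
      simp only [dif_pos hnon]
      exact Finset.min'_mem _ _
    obtain ⟨e', he', hval⟩ := Finset.mem_image.mp this
    have := (Finset.mem_filter.mp he').2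
    omega
  · -- span equality
    apply le_antisymm
    · rw [MI, Ideal.span_le]
      rintro _ ⟨e, heE, rfl⟩
      have heF : e ∈ F := heE
      obtain ⟨i, hi, hrest⟩ := hsupp e heF
      rw [mon_pure x hrest]
      have his : i ∈ s :=
        Finset.mem_biUnion.mpr ⟨e, heF,
          Finset.mem_filter.mpr ⟨Finset.mem_univ _, hi⟩⟩
      have hnon : (F.filter (fun e => e i ≠ 0)).Nonempty :=
        ⟨e, Finset.mem_filter.mpr ⟨heF, hi⟩⟩
      have hle : ε i ≤ e i := by
        rw [hε]
        simp only [dif_pos hnon]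
        exact Finset.min'_le _ _ (Finset.mem_image.mpr
          ⟨e, Finset.mem_filter.mpr ⟨heF, hi⟩, rfl⟩)
      have : x i ^ e i = x i ^ ε i * x i ^ (e i - ε i) := by
        rw [← pow_add, Nat.add_sub_cancel' hle]
      rw [this]
      exact Ideal.mul_mem_right _ _
        (Ideal.subset_span ⟨i, his, rfl⟩)
    · rw [Ideal.span_le]
      rintro _ ⟨i, his, rfl⟩
      simp only
      obtain ⟨e, heF, hei⟩ := Finset.mem_biUnion.mp his
      have hi : e i ≠ 0 := (Finset.mem_filter.mp hei).2
      have hnon : (F.filter (fun e => e i ≠ 0)).Nonempty :=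
        ⟨e, Finset.mem_filter.mpr ⟨heF, hi⟩⟩
      have : ε i ∈ (F.filter (fun e => e i ≠ 0)).image (fun e => e i) := by
        rw [hε]
        simp only [dif_pos hnon]
        exact Finset.min'_mem _ _
      obtain ⟨e', he', hval⟩ := Finset.mem_image.mp this
      have he'F := (Finset.mem_filter.mp he').1
      have he'i := (Finset.mem_filter.mp he').2
      obtain ⟨j, hj, hrest⟩ := hsupp e' he'F
      have hij : j = i := by
        by_contra hji
        exact he'i (hrest i (fun h => hji h.symm))
      subst hij
      have : x j ^ ε j = mon x e' := by rw [mon_pure x hrest, hval]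
      rw [this]
      exact mon_mem_MI x he'F

lemma foldr_inf {R : Type*} [CommRing R] (L : List (Ideal R)) :
    L.foldr (· ⊓ ·) ⊤ = ⨅ j : Fin L.length, L.get j := by
  induction L with
  | nil =>
    haveI : IsEmpty (Fin ([] : List (Ideal R)).length) := ⟨fun j => absurd j.2 (by simp)⟩
    exact (iInf_of_empty _).symm
  | cons a L ih =>
    rw [List.foldr_cons, ih]
    apply le_antisymm
    · refine le_iInf fun j => ?_
      induction j using Fin.cases with
      | zero => exact inf_le_left
      | succ i => exact inf_le_right.trans (iInf_le _ i)
    · exact le_inf (iInf_le _ (0 : Fin (L.length + 1)))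
        (le_iInf fun i => iInf_le _ i.succ)

lemma foldr_inf_append {R : Type*} [CommRing R] (L1 L2 : List (Ideal R)) :
    (L1 ++ L2).foldr (· ⊓ ·) ⊤ = L1.foldr (· ⊓ ·) ⊤ ⊓ L2.foldr (· ⊓ ·) ⊤ := by
  induction L1 with
  | nil => simp
  | cons a L ih => simp [List.foldr_cons, ih, inf_assoc]

/-- Main decomposition theorem for finitely generated monomial ideals. -/
theorem decomp {R : Type*} [CommRing R] {d : ℕ} (x : Fin d → R)
    (hW : WReg x Finset.univ) (hjac : ∀ i, x i ∈ Ideal.jacobson (⊥ : Ideal R)) :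
    ∀ (M : ℕ) (F : Finset (Fin d → ℕ)), measure F ≤ M → (∀ e ∈ F, e ≠ 0) →
    ∃ L : List (Ideal R), (∀ q ∈ L, IsGPIdeal x q) ∧
      MI x F = L.foldr (· ⊓ ·) ⊤ := by
  intro M
  induction M with
  | zero =>
    intro F hM hne
    refine ⟨[MI x F], ?_, by simp⟩
    rintro q hq
    rw [List.mem_singleton] at hq
    subst hq
    refine GP_of_pure x F hne ?_
    intro e he
    by_contra hbig
    have h1 : 1 ≤ wt e := by
      rw [wt, if_neg hbig]
      have : e ≠ 0 := hne e he
      obtain ⟨i, hi⟩ : ∃ i, e i ≠ 0 := by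
        by_contra hno; push_neg at hno
        exact this (funext fun i => hno i)
      calc 1 ≤ e i := by omega
      _ ≤ ∑ i, e i := Finset.single_le_sum (fun _ _ => Nat.zero_le _) (Finset.mem_univ i)
    have h2 : wt e ≤ measure F :=
      Finset.single_le_sum (f := wt) (fun _ _ => Nat.zero_le _) he
    omega
  | succ M ih =>
    intro F hM hne
    classical
    by_cases hallpure : ∀ e ∈ F, (Finset.univ.filter (fun i => e i ≠ 0)).card ≤ 1
    · exact ⟨[MI x F], by
        rintro q hq
        rw [List.mem_singleton] at hq
        subst hq
        exact GP_of_pure x F hne hallpure, by simp⟩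
    push_neg at hallpure
    obtain ⟨es, hes, hbig⟩ := hallpure
    obtain ⟨k, hk⟩ : ∃ k, es k ≠ 0 := by
      by_contra hno; push_neg at hno
      exact hne es hes (funext fun i => hno i)
    set a := es k with ha
    set w : Fin d → ℕ := fun i => if i = k then 0 else es i with hwdef
    have hwk : w k = 0 := by simp [hwdef]
    have hes_eq : es = delta a k + w := by
      funext i
      simp only [Pi.add_apply, delta, hwdef]
      split <;> simp_all
    have hmon : mon x es = x k ^ a * mon x w := by
      rw [hes_eq, mon_add, mon_delta]
    -- w is nonzero
    obtain ⟨j, hjk, hj⟩ : ∃ j, j ≠ k ∧ es j ≠ 0 := by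
      have h2 : 1 < (Finset.univ.filter (fun i => es i ≠ 0)).card := by omega
      obtain ⟨b, hb, c, hc, hbc⟩ := Finset.one_lt_card.mp h2
      by_cases hbk : b = k
      · exact ⟨c, fun h => hbc (h ▸ hbk ▸ rfl), (Finset.mem_filter.mp hc).2⟩
      · exact ⟨b, hbk, (Finset.mem_filter.mp hb).2⟩
    have hw0 : w ≠ 0 := by
      intro h
      have := congrFun h j
      simp only [hwdef, Pi.zero_apply, if_neg hjk] at this
      exact hj this
    have hd0 : delta a k ≠ 0 := by
      intro h
      have := congrFun h k
      simp only [delta, Pi.zero_apply, if_pos rfl] at this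
      exact hk this
    set F' := F.erase es with hF'
    -- the split
    have hMIF : MI x F = MI x (insert (delta a k) F') ⊓ MI x (insert w F') := by
      have h1 : MI x F = MI x F' ⊔ Ideal.span {x k ^ a * mon x w} := by
        conv_lhs => rw [← Finset.insert_erase hes]
        rw [MI_insert, hmon, sup_comm]
      rw [h1, split x hW hjac F' k a w hwk, MI_insert, MI_insert, mon_delta,
        sup_comm (Ideal.span {x k ^ a}) _, sup_comm (Ideal.span {mon x w}) _]
    -- measures
    have hwtes : wt es = ∑ i, es i := by rw [wt, if_neg (by omega)]
    have hsum2 : 2 ≤ ∑ i, es i := by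
      have hk' : 1 ≤ es k := by omega
      have hj' : 1 ≤ es j := by omega
      calc 2 = 1 + 1 := rfl
      _ ≤ es k + es j := by omega
      _ ≤ ∑ i ∈ {k, j}, es i := by
          rw [Finset.sum_pair (fun h => hjk h.symm)]
      _ ≤ ∑ i, es i := Finset.sum_le_sum_of_subset (Finset.subset_univ _)
    have hmF' : measure F' + wt es = measure F := Finset.sum_erase_add F wt hes
    have hwdelta : wt (delta a k) = 0 := by
      rw [wt, if_pos]
      refine Finset.card_le_one.mpr fun b hb c hc => ?_
      rw [Finset.mem_filter] at hb hc; simp only [delta] at hb hc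
      have hb2 := hb.2
      have hc2 := hc.2
      by_cases hbk : b = k
      · by_cases hck : c = k
        · rw [hbk, hck]
        · simp [hck] at hc2
      · simp [hbk] at hb2
    have hsumw : (∑ i, w i) + a = ∑ i, es i := by
      have : ∑ i, es i = ∑ i, (delta a k i + w i) := by
        rw [hes_eq]; rfl
      rw [this, Finset.sum_add_distrib]
      have : ∑ i, delta a k i = a := by
        rw [show (fun i => delta a k i) = delta a k from rfl]
        unfold delta
        rw [Finset.sum_ite_eq' Finset.univ k (fun _ => a)]
        simp
      omega
    have hwtw : wt w < wt es := by
      rw [hwtes, wt]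
      split
      · omega
      · have hk1 : 1 ≤ a := by omega
        omega
    have hm1 : measure (insert (delta a k) F') ≤ M := by
      have := measure_insert_le (delta a k) F'
      omega
    have hm2 : measure (insert w F') ≤ M := by
      have := measure_insert_le w F'
      omega
    have hne1 : ∀ e ∈ insert (delta a k) F', e ≠ 0 := by
      intro e he
      rcases Finset.mem_insert.mp he with rfl | he'
      · exact hd0
      · exact hne e (Finset.mem_of_mem_erase he')
    have hne2 : ∀ e ∈ insert w F', e ≠ 0 := by
      intro e he
      rcases Finset.mem_insert.mp he with rfl | he'
      · exact hw0
      · exact hne e (Finset.mem_of_mem_erase he')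
    obtain ⟨L1, hL1, hL1eq⟩ := ih (insert (delta a k) F') hm1 hne1
    obtain ⟨L2, hL2, hL2eq⟩ := ih (insert w F') hm2 hne2
    refine ⟨L1 ++ L2, ?_, ?_⟩
    · intro q hq
      rcases List.mem_append.mp hq with h | h
      · exact hL1 q h
      · exact hL2 q h
    · rw [hMIF, hL1eq, hL2eq, ← foldr_inf_append]

end HRS

open RingTheory.Sequence in
theorem stmt_3 {R : Type*} [CommRing R] [IsNoetherianRing R] {d : ℕ} (x : Fin d → R)
    (hreg : RingTheory.Sequence.IsRegular R (List.ofFn x))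
    (hjac : ∀ i, x i ∈ Ideal.jacobson (⊥ : Ideal R))
    (I : Ideal R) (hIproper : I ≠ ⊤) (hI0 : I ≠ ⊥)
    (hmono : ∃ E : Set (Fin d → ℕ), I = Ideal.span ((fun e => ∏ i, x i ^ e i) '' E)) :
    ∃ (n : ℕ) (q : Fin n → Ideal R), (∀ j, IsGPIdeal x (q j)) ∧ I = ⨅ j, q j := by
  classical
  obtain ⟨E, hE⟩ := hmono
  have hNT : Nontrivial R := by
    rcases subsingleton_or_nontrivial R with h | h
    · exact absurd (Subsingleton.elim I ⊤) hIproper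
    · exact h
  have hjacann : ∀ r' ∈ (List.finRange d).map x,
      r' ∈ (Module.annihilator R R).jacobson := by
    rw [HRS.annihilator_self]
    rintro r' hr'
    obtain ⟨i, _, rfl⟩ := List.mem_map.mp hr'
    exact hjac i
  have hWR : HRS.WReg x Finset.univ := by
    intro l hl _
    have h1 : l ⊆ List.finRange d := fun i _ => List.mem_finRange i
    obtain ⟨l', hperm, hsub⟩ := hl.subperm h1
    obtain ⟨r, hr⟩ := hsub.exists_perm_append
    have hreg1 : IsWeaklyRegular R ((List.finRange d).map x) := by
      rw [← List.ofFn_eq_map]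
      exact hreg.toIsWeaklyRegular
    have hreg2 : IsWeaklyRegular R ((l' ++ r).map x) :=
      hreg1.of_perm_of_subset_jacobson_annihilator (hr.map x) hjacann
    rw [List.map_append] at hreg2
    have hreg3 : IsWeaklyRegular R (l'.map x) :=
      ((isWeaklyRegular_append_iff R _ _).mp hreg2).1
    refine hreg3.of_perm_of_subset_jacobson_annihilator (hperm.map x) ?_
    rw [HRS.annihilator_self]
    rintro r' hr'
    obtain ⟨i, hi, rfl⟩ := List.mem_map.mp hr'
    have : i ∈ List.finRange d := List.mem_finRange i
    exact hjac i
  have hE' : I = Ideal.span (HRS.mon x '' E) := hE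
  obtain ⟨G, hG⟩ := (IsNoetherian.noetherian I : I.FG)
  have hGmem : ∀ g : G, (g : R) ∈ Submodule.span R (HRS.mon x '' E) := by
    intro g
    have : (g : R) ∈ I := by
      rw [← hG]
      exact Ideal.subset_span g.2
    rwa [hE'] at this
  choose T hT1 hT2 using fun g : G => Submodule.mem_span_finite_of_mem_span (hGmem g)
  set Tall : Finset R := G.attach.biUnion T with hTall
  have hTallsub : (↑Tall : Set R) ⊆ HRS.mon x '' E := by
    intro m hm
    obtain ⟨g, _, hg2⟩ := Finset.mem_biUnion.mp hm
    exact hT1 g hg2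
  have hspan : Ideal.span (↑Tall : Set R) = I := by
    apply le_antisymm
    · rw [Ideal.span_le]
      intro m hm
      rw [hE']
      exact Ideal.subset_span (hTallsub hm)
    · rw [← hG]
      rw [show (Submodule.span R (↑G : Set R) : Ideal R) = Ideal.span ↑G from rfl,
        Ideal.span_le]
      intro g hg
      have := hT2 ⟨g, hg⟩
      exact Ideal.span_mono
        (Finset.coe_subset.mpr (Finset.subset_biUnion_of_mem T (Finset.mem_attach _ _))) this
  have hex : ∀ m : Tall, ∃ e : Fin d → ℕ, HRS.mon x e = (m : R) := by
    intro m
    obtain ⟨e, _, heq⟩ := hTallsub m.2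
    exact ⟨e, heq⟩
  choose ee hee using hex
  set F : Finset (Fin d → ℕ) := Tall.attach.image ee with hF
  have hMI : HRS.MI x F = I := by
    rw [HRS.MI, ← hspan]
    congr 1
    ext m
    constructor
    · rintro ⟨e, he, rfl⟩
      rw [Finset.coe_image] at he
      obtain ⟨m', _, rfl⟩ := he
      rw [hee m']
      exact m'.2
    · intro hm
      exact ⟨ee ⟨m, hm⟩,
        Finset.mem_coe.mpr (Finset.mem_image_of_mem ee (Finset.mem_attach _ _)),
        hee ⟨m, hm⟩⟩
  have hne : ∀ e ∈ F, e ≠ 0 := by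
    intro e he h0
    apply hIproper
    rw [Ideal.eq_top_iff_one, ← hMI]
    have h1 : HRS.mon x e ∈ HRS.MI x F := HRS.mon_mem_MI x he
    rw [h0] at h1
    simpa [HRS.mon] using h1
  obtain ⟨L, hL, hLeq⟩ := HRS.decomp x hWR hjac (HRS.measure F) F le_rfl hne
  refine ⟨L.length, fun j => L.get j, fun j => hL _ (L.get_mem j), ?_⟩
  rw [← hMI, hLeq, HRS.foldr_inf]
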